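/- Let G and H be simple graphs with δ(G) ≥ 2 and δ(H) ≥ 2. If G and H each contain at least one triangle, then Cc(G × H) < Cc(G) · Cc(H) (strict inequality). -/

import Mathlib

variable {α β : Type*}

/-- Tensor (categorical) product of simple graphs. -/
def tensorProdG (G : SimpleGraph α) (H : SimpleGraph β) : SimpleGraph (α × β) where
  Adj x y := G.Adj x.1 y.1 ∧ H.Adj x.2 y.2
  symm := ⟨fun _ _ h => ⟨h.1.symm, h.2.symm⟩⟩
  loopless := ⟨fun x h => G.loopless.irrefl x.1 h.1⟩

instance (G : SimpleGraph α) (H : SimpleGraph β) [DecidableRel G.Adj] [DecidableRel H.Adj] :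
    DecidableRel (tensorProdG G H).Adj := fun x y => inferInstanceAs (Decidable (G.Adj x.1 y.1 ∧ H.Adj x.2 y.2))

/-- Number of triangles incident to `u`: edges of the induced neighborhood. -/
noncomputable def triCount (G : SimpleGraph α) [Fintype α] (u : α) : ℕ :=
  Nat.card (SimpleGraph.induce (G.neighborSet u) G).edgeSet

/-- Local clustering coefficient. -/
noncomputable def locCc (G : SimpleGraph α) [Fintype α] [DecidableRel G.Adj] (u : α) : ℝ :=
  if 2 ≤ G.degree u then (triCount G u : ℝ) / ((G.degree u).choose 2) else 0

/-- Global clustering coefficient. -/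
noncomputable def globCc (G : SimpleGraph α) [Fintype α] [DecidableRel G.Adj] : ℝ :=
  (∑ v, locCc G v) / (Fintype.card α)

/-- Minimum degree of the induced neighborhood of `u`. -/
noncomputable def nbrMinDeg (G : SimpleGraph α) [Fintype α] [DecidableRel G.Adj] (u : α) : ℕ :=
  (SimpleGraph.induce (G.neighborSet u) G).minDegree

/-- Average degree, as a real number. -/
noncomputable def avgDeg (G : SimpleGraph α) [Fintype α] [DecidableRel G.Adj] : ℝ :=
  (∑ v, (G.degree v : ℝ)) / (Fintype.card α)



section auxTensor
variable [Fintype α] [Fintype β]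

lemma tensor_neighborFinset (A : SimpleGraph α) (B : SimpleGraph β)
    [DecidableRel A.Adj] [DecidableRel B.Adj] (a : α) (b : β) :
    (tensorProdG A B).neighborFinset (a, b) = A.neighborFinset a ×ˢ B.neighborFinset b := by
  classical
  ext ⟨x, y⟩
  simp only [SimpleGraph.mem_neighborFinset, Finset.mem_product]
  exact Iff.rfl

lemma tensor_degree (A : SimpleGraph α) (B : SimpleGraph β)
    [DecidableRel A.Adj] [DecidableRel B.Adj] (a : α) (b : β) :
    (tensorProdG A B).degree (a, b) = A.degree a * B.degree b := by
  unfold SimpleGraph.degree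
  rw [tensor_neighborFinset, Finset.card_product]

lemma tensor_edgeCard (A : SimpleGraph α) (B : SimpleGraph β)
    [DecidableRel A.Adj] [DecidableRel B.Adj] :
    Nat.card (tensorProdG A B).edgeSet = 2 * (Nat.card A.edgeSet * Nat.card B.edgeSet) := by
  classical
  have hA := SimpleGraph.sum_degrees_eq_twice_card_edges A
  have hB := SimpleGraph.sum_degrees_eq_twice_card_edges B
  have hT := SimpleGraph.sum_degrees_eq_twice_card_edges (tensorProdG A B)
  have hsum : ∑ x : α × β, (tensorProdG A B).degree x
      = (∑ a, A.degree a) * (∑ b, B.degree b) := by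
    rw [Fintype.sum_prod_type, Finset.sum_mul_sum]
    exact Finset.sum_congr rfl fun a _ => Finset.sum_congr rfl fun b _ => tensor_degree A B a b
  have eA : Nat.card A.edgeSet = A.edgeFinset.card := by
    rw [Nat.card_eq_fintype_card, SimpleGraph.edgeFinset, Set.toFinset_card]
  have eB : Nat.card B.edgeSet = B.edgeFinset.card := by
    rw [Nat.card_eq_fintype_card, SimpleGraph.edgeFinset, Set.toFinset_card]
  have eT : Nat.card (tensorProdG A B).edgeSet = (tensorProdG A B).edgeFinset.card := by
    rw [Nat.card_eq_fintype_card, SimpleGraph.edgeFinset, Set.toFinset_card]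
  rw [eA, eB, eT]
  refine Nat.eq_of_mul_eq_mul_left (by norm_num : 0 < 2) ?_
  rw [← hT, hsum, hA, hB]; ring

/-- The induced neighborhood of `(u,v)` in the tensor product is isomorphic to the tensor
product of the induced neighborhoods. -/
def tensorNbhdIso (A : SimpleGraph α) (B : SimpleGraph β)
    [DecidableRel A.Adj] [DecidableRel B.Adj] (u : α) (v : β) :
    SimpleGraph.induce ((tensorProdG A B).neighborSet (u, v)) (tensorProdG A B) ≃g
      tensorProdG (SimpleGraph.induce (A.neighborSet u) A)
        (SimpleGraph.induce (B.neighborSet v) B) where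
  toEquiv :=
  { toFun := fun x => (⟨x.1.1, x.2.1⟩, ⟨x.1.2, x.2.2⟩)
    invFun := fun p => ⟨(p.1.1, p.2.1), ⟨p.1.2, p.2.2⟩⟩
    left_inv := fun _ => rfl
    right_inv := fun _ => rfl }
  map_rel_iff' := Iff.rfl

lemma triCount_tensor (A : SimpleGraph α) (B : SimpleGraph β)
    [DecidableRel A.Adj] [DecidableRel B.Adj] (u : α) (v : β) :
    triCount (tensorProdG A B) (u, v) = 2 * (triCount A u * triCount B v) := by
  classical
  unfold triCount
  rw [Nat.card_congr (tensorNbhdIso A B u v).mapEdgeSet]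
  exact tensor_edgeCard _ _

end auxTensor

lemma key_choose_ineq {d e : ℕ} (hd : 2 ≤ d) (he : 2 ≤ e) :
    2 * ((d.choose 2 : ℝ) * (e.choose 2 : ℝ)) < ((d * e).choose 2 : ℝ) := by
  have hd' : (2 : ℝ) ≤ d := by exact_mod_cast hd
  have he' : (2 : ℝ) ≤ e := by exact_mod_cast he
  rw [Nat.cast_choose_two, Nat.cast_choose_two, Nat.cast_choose_two, Nat.cast_mul]
  nlinarith [mul_pos (by linarith : (0:ℝ) < (d:ℝ)) (by linarith : (0:ℝ) < (e:ℝ))]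

lemma choose_two_pos {d : ℕ} (hd : 2 ≤ d) : (0 : ℝ) < (d.choose 2 : ℝ) := by
  exact_mod_cast Nat.choose_pos hd

section auxLoc
variable [Fintype α] [Fintype β]
variable (A : SimpleGraph α) (B : SimpleGraph β) [DecidableRel A.Adj] [DecidableRel B.Adj]

lemma locCc_tensor_lt {u : α} {v : β} (hu : 2 ≤ A.degree u) (hv : 2 ≤ B.degree v)
    (htu : 0 < triCount A u) (htv : 0 < triCount B v) :
    locCc (tensorProdG A B) (u, v) < locCc A u * locCc B v := by
  have hd : (tensorProdG A B).degree (u, v) = A.degree u * B.degree v := tensor_degree A B u v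
  have hd2 : 2 ≤ (tensorProdG A B).degree (u, v) := by
    rw [hd]; nlinarith
  rw [locCc, locCc, locCc, if_pos hd2, if_pos hu, if_pos hv, triCount_tensor, hd]
  rw [div_mul_div_comm]
  have h1 : (0 : ℝ) < ((A.degree u * B.degree v).choose 2 : ℝ) :=
    choose_two_pos (by nlinarith)
  have h2 : (0 : ℝ) < ((A.degree u).choose 2 : ℝ) * ((B.degree v).choose 2 : ℝ) :=
    mul_pos (choose_two_pos hu) (choose_two_pos hv)
  rw [div_lt_div_iff₀ h1 h2]
  have hkey := key_choose_ineq hu hv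
  have hts : (0 : ℝ) < (triCount A u : ℝ) * (triCount B v : ℝ) := by
    have := mul_pos htu htv
    exact_mod_cast this
  push_cast
  nlinarith

lemma locCc_tensor_le {u : α} {v : β} (hu : 2 ≤ A.degree u) (hv : 2 ≤ B.degree v) :
    locCc (tensorProdG A B) (u, v) ≤ locCc A u * locCc B v := by
  rcases Nat.eq_zero_or_pos (triCount A u) with h | h
  · have hd2 : 2 ≤ (tensorProdG A B).degree (u, v) := by
      rw [tensor_degree A B u v]; nlinarith
    simp only [locCc, if_pos hd2, if_pos hu, if_pos hv, triCount_tensor, h]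
    simp
  rcases Nat.eq_zero_or_pos (triCount B v) with h' | h'
  · have hd2 : 2 ≤ (tensorProdG A B).degree (u, v) := by
      rw [tensor_degree A B u v]; nlinarith
    simp only [locCc, if_pos hd2, if_pos hu, if_pos hv, triCount_tensor, h']
    simp
  exact (locCc_tensor_lt A B hu hv h h').le

omit [Fintype β] in
lemma triCount_pos_of_not_cliqueFree (h : ¬ A.CliqueFree 3) : ∃ u, 0 < triCount A u := by
  classical
  rw [SimpleGraph.CliqueFree] at h
  push_neg at h
  obtain ⟨s, hs⟩ := h
  obtain ⟨a, b, c, hab, hac, hbc, rfl⟩ := Finset.card_eq_three.mp hs.card_eq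
  have hadj := hs.isClique
  have h1 : A.Adj a b := hadj (by simp) (by simp) hab
  have h2 : A.Adj a c := hadj (by simp) (by simp) hac
  have h3 : A.Adj b c := hadj (by simp) (by simp) hbc
  refine ⟨a, ?_⟩
  have hne : ((SimpleGraph.induce (A.neighborSet a) A).edgeSet).Nonempty :=
    ⟨s(⟨b, h1⟩, ⟨c, h2⟩), h3⟩
  have : Nonempty ((SimpleGraph.induce (A.neighborSet a) A).edgeSet) := hne.to_subtype
  exact Nat.card_pos

end auxLoc

variable [Fintype α] [Fintype β] (G : SimpleGraph α) (H : SimpleGraph β)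
  [DecidableRel G.Adj] [DecidableRel H.Adj]

theorem tensor_globCc_lt (hG : ∀ u : α, 2 ≤ G.degree u) (hH : ∀ v : β, 2 ≤ H.degree v)
    (htG : ¬ G.CliqueFree 3) (htH : ¬ H.CliqueFree 3) :
    globCc (tensorProdG G H) < globCc G * globCc H := by
  classical
  obtain ⟨u₀, hu₀⟩ := triCount_pos_of_not_cliqueFree G htG
  obtain ⟨v₀, hv₀⟩ := triCount_pos_of_not_cliqueFree H htH
  have hα : (0:ℝ) < Fintype.card α := by exact_mod_cast Fintype.card_pos_iff.mpr ⟨u₀⟩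
  have hβ : (0:ℝ) < Fintype.card β := by exact_mod_cast Fintype.card_pos_iff.mpr ⟨v₀⟩
  have hsum : ∑ x : α × β, locCc (tensorProdG G H) x
      < (∑ u, locCc G u) * (∑ v, locCc H v) := by
    have heq : (∑ u, locCc G u) * (∑ v, locCc H v)
        = ∑ x : α × β, locCc G x.1 * locCc H x.2 := by
      rw [Finset.sum_mul_sum, ← Finset.univ_product_univ, Finset.sum_product]
    rw [heq]
    refine Finset.sum_lt_sum (fun x _ => ?_) ⟨(u₀, v₀), Finset.mem_univ _, ?_⟩
    · obtain ⟨u, v⟩ := x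
      exact locCc_tensor_le G H (hG u) (hH v)
    · exact locCc_tensor_lt G H (hG u₀) (hH v₀) hu₀ hv₀
  unfold globCc
  rw [Fintype.card_prod, Nat.cast_mul, div_mul_div_comm]
  exact div_lt_div_of_pos_right hsum (by positivity)
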